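/- Let M be a continuous real-valued L^q-martingale on [0,T] for some q ≥ 2, and let D = {t_k}_{k=0}^n be a finite partition of [0,T]. Then E(|Σ_{k=0}^{n−1} (M_{t_{k+1}} − M_{t_k})² − ⟨M⟩_T|^{q/2}) ≤ C_q (E(‖M‖_{4-var,[0,T]}^q) + E(‖⟨M⟩‖_{1-var,[0,T]}^{q/2})) for a constant C_q depending only on q. -/

import Mathlib

open scoped BigOperators ENNReal
open MeasureTheory Filter Set

noncomputable section

/-- A finite partition of the interval `[a,b]`. -/
structure RPPartition (a b : ℝ) where
  n : ℕ
  t : ℕ → ℝ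
  mono : Monotone t
  first : t 0 = a
  last : ∀ k, n ≤ k → t k = b

/-- The mesh of the partition is at most `δ`. -/
def RPPartition.MeshLe {a b : ℝ} (D : RPPartition a b) (δ : ℝ) : Prop :=
  ∀ k < D.n, D.t (k + 1) - D.t k ≤ δ

/-- `pVar p f a b` is the `p`-variation of `f` on `[a,b]`, raised to the power `p`:
the supremum over finite partitions of the sums `∑ ‖f (t_{k+1}) - f (t_k)‖ ^ p`. -/
def pVar {E : Type*} [NormedAddCommGroup E] (p : ℝ) (f : ℝ → E) (a b : ℝ) : ℝ≥0∞ :=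
  ⨆ D : RPPartition a b,
    ENNReal.ofReal (∑ k ∈ Finset.range D.n, ‖f (D.t (k + 1)) - f (D.t k)‖ ^ p)

abbrev Vec (d : ℕ) := Fin d → ℝ
abbrev Ten (d : ℕ) := Fin d → Fin d → ℝ

/-- Tensor product of two vectors. -/
def tpr2 {d : ℕ} (a b : Vec d) : Ten d := fun i j => a i * b j

/-- Product in the level-2 truncated tensor group (scalar component 1 suppressed). -/
def g2mul {d : ℕ} (g h : Vec d × Ten d) : Vec d × Ten d :=
  (g.1 + h.1, g.2 + h.2 + tpr2 g.1 h.1)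

def g2one (d : ℕ) : Vec d × Ten d := (0, 0)

def g2inv {d : ℕ} (g : Vec d × Ten d) : Vec d × Ten d :=
  (-g.1, -g.2 + tpr2 g.1 g.1)

/-- Group increment `g⁻¹ ⊗ h`. -/
def g2inc {d : ℕ} (g h : Vec d × Ten d) : Vec d × Ten d := g2mul (g2inv g) h

/-- Homogeneous norm `‖g‖ = |π₁ g| + |π₂ g|^{1/2}`. -/
def homNorm {d : ℕ} (g : Vec d × Ten d) : ℝ := ‖g.1‖ + Real.sqrt ‖g.2‖

/-- `p`-variation (to the power `p`) of a tensor-group valued path, w.r.t. group increments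
and the homogeneous norm. -/
def pVarG {d : ℕ} (p : ℝ) (γ : ℝ → Vec d × Ten d) (a b : ℝ) : ℝ≥0∞ :=
  ⨆ D : RPPartition a b,
    ENNReal.ofReal
      (∑ k ∈ Finset.range D.n, homNorm (g2inc (γ (D.t k)) (γ (D.t (k + 1)))) ^ p)

/-- Symmetric part of a 2-tensor. -/
def symT {d : ℕ} (A : Ten d) : Ten d := fun i j => (A i j + A j i) / 2

/-- Antisymmetric part of a 2-tensor. -/
def antiT {d : ℕ} (A : Ten d) : Ten d := fun i j => (A i j - A j i) / 2

/-- `I` is the Riemann–Stieltjes integral `∫_a^b f dg`, as the limit of left Riemann sums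
along partitions of mesh tending to `0`. -/
def IsRSIntegralOn (f g : ℝ → ℝ) (a b : ℝ) (I : ℝ) : Prop :=
  ∀ ε > (0:ℝ), ∃ δ > (0:ℝ), ∀ D : RPPartition a b, D.MeshLe δ →
    |(∑ k ∈ Finset.range D.n, f (D.t k) * (g (D.t (k + 1)) - g (D.t k))) - I| ≤ ε

/-- The truncated tensor algebra `T^{(m)}(ℝᵈ)`, level `k` encoded as functions on
multi-indices of length `k`. -/
def TA (d m : ℕ) := ∀ k : Fin (m + 1), (Fin k.1 → Fin d) → ℝ

/-- Truncated tensor product on `TA d m`. -/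
def taMul {d m : ℕ} (x y : TA d m) : TA d m := fun k idx =>
  ∑ j : Fin (k.1 + 1),
    x ⟨j.1, by have h1 := j.2; have h2 := k.2; omega⟩
        (fun i => idx ⟨i.1, by have h1 : i.1 < j.1 := i.2; have h2 := j.2; omega⟩) *
    y ⟨k.1 - j.1, by have h2 := k.2; omega⟩
        (fun i => idx ⟨j.1 + i.1, by
          have h1 : i.1 < k.1 - j.1 := i.2; have h2 := j.2; omega⟩)

/-- Left Riemann–Stieltjes sum of random paths. -/
def RSumLeft {Ω : Type*} (f g : ℝ → Ω → ℝ) {a b : ℝ} (D : RPPartition a b) (ω : Ω) : ℝ :=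
  ∑ k ∈ Finset.range D.n, f (D.t k) ω * (g (D.t (k + 1)) ω - g (D.t k) ω)

/-- Trapezoidal (Stratonovich-type) Riemann sum. -/
def RSumTrap {Ω : Type*} (f g : ℝ → Ω → ℝ) {a b : ℝ} (D : RPPartition a b) (ω : Ω) : ℝ :=
  ∑ k ∈ Finset.range D.n,
    (f (D.t k) ω + f (D.t (k + 1)) ω) / 2 * (g (D.t (k + 1)) ω - g (D.t k) ω)

/-- Sum of products of increments (quadratic covariation sums). -/
def RSumQuad {Ω : Type*} (f g : ℝ → Ω → ℝ) {a b : ℝ} (D : RPPartition a b) (ω : Ω) : ℝ :=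
  ∑ k ∈ Finset.range D.n,
    (f (D.t (k + 1)) ω - f (D.t k) ω) * (g (D.t (k + 1)) ω - g (D.t k) ω)

/-- Convergence in probability of partition sums as the mesh tends to `0`. -/
def TendstoInProbOnPartitions {Ω : Type*} [MeasurableSpace Ω] (μ : Measure Ω) (a b : ℝ)
    (Sf : RPPartition a b → Ω → ℝ) (L : Ω → ℝ) : Prop :=
  ∀ ε > (0:ℝ), ∀ η > (0:ℝ), ∃ δ > (0:ℝ), ∀ D : RPPartition a b, D.MeshLe δ →
    μ {ω | ε ≤ |Sf D ω - L ω|} ≤ ENNReal.ofReal η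

end

section Aux

lemma s14_rpow_tangent {p a b : ℝ} (hp : 1 ≤ p) (ha : 0 ≤ a) (hab : a ≤ b) :
    b ^ p - a ^ p ≤ p * b ^ (p - 1) * (b - a) := by
  rcases eq_or_lt_of_le hab with rfl | hlt
  · simp
  have hb : 0 ≤ b := ha.trans hab
  have hcont : Continuous fun x : ℝ => x ^ p := by
    apply Real.continuous_rpow_const; linarith
  obtain ⟨c, hc, hslope⟩ := exists_hasDerivAt_eq_slope (fun x => x ^ p)
    (fun x => p * x ^ (p - 1)) hlt hcont.continuousOn
    (fun x _ => Real.hasDerivAt_rpow_const (Or.inr hp))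
  have hcb : c ≤ b := le_of_lt hc.2
  have hc0 : 0 ≤ c := le_trans ha (le_of_lt hc.1)
  have h1 : (b ^ p - a ^ p) / (b - a) ≤ p * b ^ (p - 1) := by
    rw [← hslope]
    have := Real.rpow_le_rpow hc0 hcb (by linarith : (0:ℝ) ≤ p - 1)
    nlinarith [this, hp]
  have hba : 0 < b - a := by linarith
  calc b ^ p - a ^ p = (b ^ p - a ^ p) / (b - a) * (b - a) := by field_simp
    _ ≤ p * b ^ (p - 1) * (b - a) := mul_le_mul_of_nonneg_right h1 (le_of_lt hba)

lemma s14_pathwise {p : ℝ} (hp : 1 ≤ p) (g : ℕ → ℝ) (h0 : g 0 = 0)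
    (hm : ∀ k, g k ≤ g (k + 1)) {Dst : ℝ} (hDst : 0 ≤ Dst) (n : ℕ)
    (hD : ∀ k < n, g (k + 1) - g k ≤ Dst) :
    g n ^ p ≤ p * (∑ k ∈ Finset.range n, (g (k + 1) - g k) * g k ^ (p - 1))
      + p * Dst * g n ^ (p - 1) := by
  have hmono : Monotone g := monotone_nat_of_le_succ hm
  have hg0 : ∀ k, 0 ≤ g k := fun k => h0 ▸ hmono (Nat.zero_le k)
  have hp0 : (0:ℝ) < p := by linarith
  induction n with
  | zero =>
    simp only [Finset.range_zero, Finset.sum_empty, mul_zero, zero_add, h0]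
    rw [Real.zero_rpow (by linarith : p ≠ 0)]
    positivity
  | succ n ih =>
    have ihn := ih (fun k hk => hD k (Nat.lt_succ_of_lt hk))
    have htan : g (n+1) ^ p - g n ^ p ≤ p * g (n+1) ^ (p-1) * (g (n+1) - g n) :=
      s14_rpow_tangent hp (hg0 n) (hm n)
    have hZmono : g n ^ (p-1) ≤ g (n+1) ^ (p-1) :=
      Real.rpow_le_rpow (hg0 n) (hm n) (by linarith)
    have hdelta : g (n+1) - g n ≤ Dst := hD n (Nat.lt_succ_self n)
    have hdnn : 0 ≤ g (n+1) - g n := by linarith [hm n]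
    have key : g (n+1) ^ (p-1) * (g (n+1) - g n)
        ≤ (g (n+1) - g n) * g n ^ (p-1) + Dst * (g (n+1) ^ (p-1) - g n ^ (p-1)) := by
      nlinarith [hZmono, hdelta, hdnn]
    rw [Finset.sum_range_succ]
    nlinarith [ihn, htan, key, hp0, mul_le_mul_of_nonneg_left key (le_of_lt hp0)]

lemma s14_add_rpow_le {p u v : ℝ} (hp : 0 ≤ p) (hu : 0 ≤ u) (hv : 0 ≤ v) :
    (u + v) ^ p ≤ 2 ^ p * (u ^ p + v ^ p) := by
  have hm : u + v ≤ 2 * max u v := by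
    rcases le_total u v with h | h
    · simp [max_eq_right h]; linarith
    · simp [max_eq_left h]; linarith
  have h0m : 0 ≤ max u v := le_max_of_le_left hu
  calc (u + v) ^ p ≤ (2 * max u v) ^ p :=
        Real.rpow_le_rpow (by linarith) hm hp
    _ = 2 ^ p * (max u v) ^ p := Real.mul_rpow (by norm_num) h0m
    _ ≤ 2 ^ p * (u ^ p + v ^ p) := by
        apply mul_le_mul_of_nonneg_left _ (Real.rpow_nonneg (by norm_num) p)
        rcases max_cases u v with ⟨h, _⟩ | ⟨h, _⟩ <;> rw [h]
        · exact le_add_of_nonneg_right (Real.rpow_nonneg hv p)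
        · exact le_add_of_nonneg_left (Real.rpow_nonneg hu p)

lemma s14_mart_test {Ω : Type} {m0 : MeasurableSpace Ω} {μ : Measure Ω}
    [IsProbabilityMeasure μ] {F : Filtration ℝ m0} {X : ℝ → Ω → ℝ}
    (hX : Martingale X F μ) {s t : ℝ} (hst : s ≤ t) {Z : Ω → ℝ}
    (hZ : StronglyMeasurable[F s] Z) (hint : Integrable (fun ω => Z ω * X t ω) μ) :
    ∫ ω, Z ω * X t ω ∂μ = ∫ ω, Z ω * X s ω ∂μ := by
  have h1 : μ[Z * X t|F s] =ᵐ[μ] Z * μ[X t|F s] :=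
    condExp_mul_of_stronglyMeasurable_left hZ hint (hX.integrable t)
  have h2 : μ[X t|F s] =ᵐ[μ] X s := hX.condExp_ae_eq hst
  calc ∫ ω, Z ω * X t ω ∂μ = ∫ ω, (μ[Z * X t|F s]) ω ∂μ :=
        (integral_condExp (F.le s)).symm
    _ = ∫ ω, (Z * μ[X t|F s]) ω ∂μ := integral_congr_ae h1
    _ = ∫ ω, Z ω * X s ω ∂μ := integral_congr_ae (by
        filter_upwards [h2] with ω hω
        simp only [Pi.mul_apply, hω])

end Aux

set_option maxHeartbeats 2000000 in
theorem statement14 (q : ℝ) (hq : 2 ≤ q) :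
    ∃ C : ℝ≥0∞, 0 < C ∧ C < ⊤ ∧
      ∀ {Ω : Type} [MeasurableSpace Ω] (μ : Measure Ω) [IsProbabilityMeasure μ],
        ∀ (F : Filtration ℝ ‹MeasurableSpace Ω›) (T : ℝ) (M : ℝ → Ω → ℝ),
          (∀ ω, Continuous fun t => M t ω) → Martingale M F μ →
          (∀ t, MemLp (M t) (ENNReal.ofReal q) μ) →
          ∀ A : ℝ → Ω → ℝ, (∀ ω, Continuous fun t => A t ω) → (∀ ω, A 0 ω = 0) →
            (∀ ω, MonotoneOn (fun t => A t ω) (Set.Icc 0 T)) →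
            Martingale (fun t ω => M t ω ^ 2 - A t ω) F μ →
            ∀ D : RPPartition 0 T,
              (∫⁻ ω, ENNReal.ofReal
                  (|(∑ k ∈ Finset.range D.n, (M (D.t (k + 1)) ω - M (D.t k) ω) ^ 2) -
                      A T ω| ^ (q / 2)) ∂μ) ≤
                C * ((∫⁻ ω, pVar 4 (fun t => M t ω) 0 T ^ (q / 4) ∂μ) +
                  ∫⁻ ω, pVar 1 (fun t => A t ω) 0 T ^ (q / 2) ∂μ) := by
  classical
  have hq0 : (0:ℝ) < q := by linarith
  set p : ℝ := q / 2 with hpdef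
  have hp1 : 1 ≤ p := by rw [hpdef]; linarith
  have hp0 : (0:ℝ) < p := by linarith
  set Kq : ℝ := 2 ^ p * (2 * (2*p) ^ (p-1) * 2 ^ p + 1) with hKqdef
  have hKq0 : (0:ℝ) < Kq := by positivity
  refine ⟨ENNReal.ofReal Kq, ENNReal.ofReal_pos.2 hKq0, ENNReal.ofReal_lt_top, ?_⟩
  intro Ω mΩ μ hprob F T M hMc hMart hMLp A hAc hA0 hAmono hNmart D
  -- ======== setup ========
  have hT : 0 ≤ T := by
    have h := D.mono (Nat.zero_le D.n); rwa [D.first, D.last D.n le_rfl] at h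
  set n := D.n with hn
  have hτIcc : ∀ k, k ≤ n → D.t k ∈ Icc (0:ℝ) T := by
    intro k hk
    constructor
    · have h := D.mono (Nat.zero_le k); rwa [D.first] at h
    · have h := D.mono hk; rwa [D.last n le_rfl] at h
  set x : ℕ → Ω → ℝ := fun k ω => M (D.t (k+1)) ω - M (D.t k) ω with hxdef
  set G : ℕ → Ω → ℝ := fun k ω => ∑ j ∈ Finset.range k, (x j ω)^2 with hGdef
  set AT : Ω → ℝ := A T with hATdef
  set Dst : Ω → ℝ := fun ω => Real.sqrt (∑ j ∈ Finset.range n, ((x j ω)^2)^2) with hDstdef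
  set a : ℕ → Ω → ℝ := fun k ω => A (D.t (k+1)) ω - A (D.t k) ω with hadef
  set Z : ℕ → Ω → ℝ := fun j ω => G j ω ^ (p-1) with hZdef
  set Q' : ℝ≥0∞ := ENNReal.ofReal q with hQ'def
  set P : ℝ≥0∞ := ENNReal.ofReal p with hPdef
  have hPne0 : P ≠ 0 := by
    simp only [hPdef, ne_eq, ENNReal.ofReal_eq_zero, not_le]; exact hp0
  have hPneT : P ≠ ⊤ := ENNReal.ofReal_ne_top
  have hPtoReal : P.toReal = p := ENNReal.toReal_ofReal hp0.le
  -- ======== pointwise positivity facts ========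
  have hGnn : ∀ k ω, 0 ≤ G k ω := fun k ω =>
    Finset.sum_nonneg fun j _ => sq_nonneg _
  have hGmono : ∀ {j k : ℕ}, j ≤ k → ∀ ω, G j ω ≤ G k ω := fun {j k} hjk ω =>
    Finset.sum_le_sum_of_subset_of_nonneg (Finset.range_subset_range.2 hjk)
      (fun i _ _ => sq_nonneg _)
  have hDstnn : ∀ ω, 0 ≤ Dst ω := fun ω => Real.sqrt_nonneg _
  have hxsqDst : ∀ k, k < n → ∀ ω, x k ω ^ 2 ≤ Dst ω := by
    intro k hk ω
    have h1 : (x k ω ^ 2) ^ 2 ≤ ∑ j ∈ Finset.range n, ((x j ω)^2)^2 :=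
      Finset.single_le_sum (f := fun j => ((x j ω)^2)^2) (fun j _ => sq_nonneg _)
        (Finset.mem_range.2 hk)
    calc x k ω ^ 2 = Real.sqrt ((x k ω ^ 2) ^ 2) := (Real.sqrt_sq (sq_nonneg _)).symm
      _ ≤ Dst ω := Real.sqrt_le_sqrt h1
  have hATnn : ∀ ω, 0 ≤ AT ω := by
    intro ω
    have := hAmono ω (left_mem_Icc.2 hT) (right_mem_Icc.2 hT) hT
    simpa [hA0 ω] using this
  have hAτnn : ∀ k, k ≤ n → ∀ ω, 0 ≤ A (D.t k) ω := by
    intro k hk ω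
    have := hAmono ω (left_mem_Icc.2 hT) (hτIcc k hk) (hτIcc k hk).1
    simpa [hA0 ω] using this
  have hAτle : ∀ k, k ≤ n → ∀ ω, A (D.t k) ω ≤ AT ω := fun k hk ω =>
    hAmono ω (hτIcc k hk) (right_mem_Icc.2 hT) (hτIcc k hk).2
  have hann : ∀ k, k < n → ∀ ω, 0 ≤ a k ω := by
    intro k hk ω
    have := hAmono ω (hτIcc k hk.le) (hτIcc (k+1) hk) (D.mono (Nat.le_succ k))
    simp only [hadef]; linarith [this]
  -- ======== measurability ========
  have hMs : ∀ t, StronglyMeasurable[F t] (M t) := hMart.stronglyAdapted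
  have hNs : ∀ t, StronglyMeasurable[F t] (fun ω => M t ω ^ 2 - A t ω) := hNmart.stronglyAdapted
  have hAs : ∀ t, StronglyMeasurable[F t] (A t) := by
    intro t
    have h := ((hMs t).mul (hMs t)).sub (hNs t)
    have e : A t = (M t * M t - fun ω => M t ω ^ 2 - A t ω) := by
      funext ω; simp only [Pi.sub_apply, Pi.mul_apply]; ring
    rw [e]; exact h
  have hxs : ∀ k, StronglyMeasurable[F (D.t (k+1))] (x k) := by
    intro k
    exact (hMs _).sub ((hMs _).mono (F.mono (D.mono (Nat.le_succ k))))
  have hGs : ∀ j, StronglyMeasurable[F (D.t j)] (G j) := by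
    intro j
    rw [hGdef]
    apply Finset.stronglyMeasurable_fun_sum
    intro i hi
    have h1 : StronglyMeasurable[F (D.t (i+1))] (fun ω => x i ω ^ 2) := by
      have e : (fun ω => x i ω ^ 2) = (x i * x i) := by
        funext ω; simp only [Pi.mul_apply]; ring
      rw [e]; exact (hxs i).mul (hxs i)
    exact h1.mono (F.mono (D.mono (Nat.succ_le_of_lt (Finset.mem_range.1 hi))))
  have hZs : ∀ j, StronglyMeasurable[F (D.t j)] (Z j) := by
    intro j
    rw [hZdef]
    exact (Real.continuous_rpow_const (by linarith : 0 ≤ p - 1)).comp_stronglyMeasurable (hGs j)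
  -- global (ambient σ-algebra) versions
  have hGsm : ∀ j, StronglyMeasurable (G j) := fun j => (hGs j).mono (F.le _)
  have hATsm : StronglyMeasurable AT := (hAs T).mono (F.le T)
  have hDstsm : StronglyMeasurable Dst := by
    rw [hDstdef]
    apply Real.continuous_sqrt.comp_stronglyMeasurable
    apply Finset.stronglyMeasurable_fun_sum
    intro i _
    have h : StronglyMeasurable (x i) := (hxs i).mono (F.le _)
    have e : (fun ω => ((x i ω)^2)^2) = (x i * x i) * (x i * x i) := by
      funext ω; simp only [Pi.mul_apply]; ring
    rw [e]; exact (h.mul h).mul (h.mul h)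
  -- ======== MemLp facts ========
  have hQ'ne0 : Q' ≠ 0 := by
    simp only [hQ'def, ne_eq, ENNReal.ofReal_eq_zero, not_le]; exact hq0
  have hconjQQ : 1/P = 1/Q' + 1/Q' := by
    rw [hPdef, hQ'def, one_div, one_div, ← ENNReal.ofReal_inv_of_pos hp0,
      ← ENNReal.ofReal_inv_of_pos hq0, ← ENNReal.ofReal_add (by positivity) (by positivity)]
    congr 1
    rw [hpdef]; field_simp; ring
  have hmulLp : ∀ f g : Ω → ℝ, MemLp f Q' μ → MemLp g Q' μ →
      MemLp (fun ω => f ω * g ω) P μ := by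
    intro f g hf hg
    have := MemLp.smul (μ := μ) (r := P) hg hf (hpqr := ⟨by simpa [one_div] using hconjQQ.symm⟩)
    exact this
  have hxLq : ∀ k, MemLp (x k) Q' μ := fun k => (hMLp _).sub (hMLp _)
  have hx2Lp : ∀ k, MemLp (fun ω => x k ω ^ 2) P μ := by
    intro k
    have := hmulLp _ _ (hxLq k) (hxLq k)
    have e : (fun ω => x k ω * x k ω) = fun ω => x k ω ^ 2 := by funext ω; ring
    rwa [e] at this
  have hGLp : ∀ k, MemLp (G k) P μ := by
    intro k
    have := memLp_finset_sum (μ := μ) (p := P) (Finset.range k)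
      (f := fun j ω => x j ω ^ 2) (fun j _ => hx2Lp j)
    simpa [hGdef] using this
  -- ======== reduction to finite RHS ========
  by_cases hI1 : (∫⁻ ω, pVar 1 (fun t => A t ω) 0 T ^ p ∂μ) = ⊤
  · rw [hI1, add_top, ENNReal.mul_top (ENNReal.ofReal_pos.2 hKq0).ne']
    exact le_top
  -- pointwise bound of A T by the 1-variation
  have hATbound : ∀ ω, ENNReal.ofReal (AT ω) ≤ pVar 1 (fun t => A t ω) 0 T := by
    intro ω
    have hmono1 : Monotone (fun k : ℕ => if k = 0 then (0:ℝ) else T) := by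
      intro i j hij
      by_cases hi : i = 0
      · by_cases hj : j = 0 <;> simp [hi, hj, hT]
      · have hj : j ≠ 0 := by omega
        simp [hi, hj]
    let D1 : RPPartition 0 T :=
      ⟨1, fun k => if k = 0 then (0:ℝ) else T, hmono1, by simp, by
        intro k hk
        have : k ≠ 0 := by omega
        simp [this]⟩
    have h1 : ENNReal.ofReal
        (∑ k ∈ Finset.range D1.n, ‖A (D1.t (k+1)) ω - A (D1.t k) ω‖ ^ (1:ℝ))
        ≤ pVar 1 (fun t => A t ω) 0 T := le_iSup (fun D' : RPPartition 0 T =>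
          ENNReal.ofReal (∑ k ∈ Finset.range D'.n,
            ‖(fun t => A t ω) (D'.t (k+1)) - (fun t => A t ω) (D'.t k)‖ ^ (1:ℝ))) D1
    refine le_trans (le_of_eq ?_) h1
    congr 1
    simp [D1, hA0 ω, Real.rpow_one, Real.norm_eq_abs, abs_of_nonneg (hATnn ω), hATdef]
    exact (abs_of_nonneg (hATnn ω)).symm
  -- MemLp of A T and friends
  have hATLp : MemLp AT P μ := by
    refine ⟨hATsm.aestronglyMeasurable, ?_⟩
    rw [eLpNorm_eq_lintegral_rpow_enorm_toReal hPne0 hPneT]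
    refine ENNReal.rpow_lt_top_of_nonneg (by positivity) ?_
    refine ne_top_of_le_ne_top hI1 (lintegral_mono fun ω => ?_)
    rw [hPtoReal, Real.enorm_eq_ofReal (hATnn ω)]
    exact ENNReal.rpow_le_rpow (hATbound ω) hp0.le
  have hAτLp : ∀ k, k ≤ n → MemLp (A (D.t k)) P μ := by
    intro k hk
    refine MemLp.of_le hATLp ((hAs _).mono (F.le _)).aestronglyMeasurable ?_
    refine Eventually.of_forall fun ω => ?_
    rw [Real.norm_eq_abs, Real.norm_eq_abs, abs_of_nonneg (hAτnn k hk ω),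
      abs_of_nonneg (hATnn ω)]
    exact hAτle k hk ω
  have haLp : ∀ k, k < n → MemLp (a k) P μ := fun k hk =>
    (hAτLp (k+1) hk).sub (hAτLp k hk.le)
  have hDstLp : MemLp Dst P μ := by
    refine MemLp.of_le (hGLp n) hDstsm.aestronglyMeasurable ?_
    refine Eventually.of_forall fun ω => ?_
    rw [Real.norm_eq_abs, Real.norm_eq_abs, abs_of_nonneg (hDstnn ω),
      abs_of_nonneg (hGnn n ω)]
    have h1 : ∑ j ∈ Finset.range n, ((x j ω)^2)^2 ≤ (G n ω) ^ 2 := by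
      rw [hGdef]
      simp only []
      rw [sq (∑ j ∈ Finset.range n, x j ω ^ 2)]
      calc ∑ j ∈ Finset.range n, ((x j ω)^2)^2
          ≤ ∑ j ∈ Finset.range n, (x j ω ^ 2) * (∑ i ∈ Finset.range n, x i ω ^ 2) := by
            apply Finset.sum_le_sum
            intro i hi
            rw [sq (x i ω ^ 2)]
            exact mul_le_mul_of_nonneg_left
              (Finset.single_le_sum (f := fun i => x i ω ^ 2)
                (fun j _ => sq_nonneg _) hi) (sq_nonneg _)
        _ = (∑ j ∈ Finset.range n, x j ω ^ 2) * (∑ i ∈ Finset.range n, x i ω ^ 2) := by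
            rw [← Finset.sum_mul]
    calc Dst ω = Real.sqrt (∑ j ∈ Finset.range n, ((x j ω)^2)^2) := rfl
      _ ≤ Real.sqrt ((G n ω)^2) := Real.sqrt_le_sqrt h1
      _ = G n ω := Real.sqrt_sq (hGnn n ω)
  -- ======== conjugate exponent machinery ========
  set P' : ℝ≥0∞ := if p = 1 then ⊤ else ENNReal.ofReal (p/(p-1)) with hP'def
  have hconjPP' : 1/1 = 1/P' + 1/P := by
    by_cases h1 : p = 1
    · simp [hP'def, h1, hPdef]
    · have hplt : 1 < p := lt_of_le_of_ne hp1 (Ne.symm h1)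
      have hpm : (0:ℝ) < p - 1 := by linarith
      rw [hP'def, if_neg h1, hPdef, one_div, one_div, one_div,
        ← ENNReal.ofReal_inv_of_pos (by positivity : (0:ℝ) < p/(p-1)),
        ← ENNReal.ofReal_inv_of_pos hp0,
        ← ENNReal.ofReal_add (by positivity) (by positivity), inv_one,
        ← ENNReal.ofReal_one]
      congr 1
      field_simp
      ring
  have hZLp : ∀ j, MemLp (Z j) P' μ := by
    intro j
    by_cases h1 : p = 1
    · have e : Z j = fun _ => (1:ℝ) := by
        funext ω; rw [hZdef]; simp [h1]
      rw [e]; exact memLp_const 1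
    · have hplt : 1 < p := lt_of_le_of_ne hp1 (Ne.symm h1)
      have hpm : (0:ℝ) < p - 1 := by linarith
      refine ⟨((Real.continuous_rpow_const (by linarith : 0 ≤ p - 1)).comp_stronglyMeasurable
        (hGsm j)).aestronglyMeasurable, ?_⟩
      have e : Z j = fun ω => ‖G j ω‖ ^ (p-1) := by
        funext ω; rw [hZdef]
        simp only [Real.norm_eq_abs, abs_of_nonneg (hGnn j ω)]
      rw [e, eLpNorm_norm_rpow _ hpm]
      have e2 : P' * ENNReal.ofReal (p-1) = P := by
        rw [hP'def, if_neg h1, hPdef, ← ENNReal.ofReal_mul (by positivity)]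
        congr 1
        field_simp
      rw [e2]
      exact ENNReal.rpow_lt_top_of_nonneg (by linarith) (hGLp j).eLpNorm_lt_top.ne
  have hmulZInt : ∀ j (f : Ω → ℝ), MemLp f P μ → Integrable (fun ω => Z j ω * f ω) μ := by
    intro j f hf
    rw [← memLp_one_iff_integrable]
    have := MemLp.smul (μ := μ) (r := 1) hf (hZLp j) (hpqr := ⟨by simpa [one_div] using hconjPP'.symm⟩)
    exact this
  -- more MemLp facts
  have hMMLp : ∀ s t : ℝ, MemLp (fun ω => M s ω * M t ω) P μ := fun s t =>
    hmulLp _ _ (hMLp s) (hMLp t)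
  have hNLp : ∀ k, k ≤ n → MemLp (fun ω => M (D.t k) ω ^ 2 - A (D.t k) ω) P μ := by
    intro k hk
    have h1 : MemLp (fun ω => M (D.t k) ω ^ 2) P μ := by
      have := hMMLp (D.t k) (D.t k)
      have e : (fun ω => M (D.t k) ω * M (D.t k) ω) = fun ω => M (D.t k) ω ^ 2 := by
        funext ω; ring
      rwa [e] at this
    exact h1.sub (hAτLp k hk)
  -- ======== key martingale identity ========
  have R1 : ∀ j, j < n → (∫ ω, x j ω ^ 2 * Z j ω ∂μ) = ∫ ω, a j ω * Z j ω ∂μ := by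
    intro j hj
    have hj1 : j + 1 ≤ n := hj
    have hst : D.t j ≤ D.t (j+1) := D.mono (Nat.le_succ j)
    have hZMs : StronglyMeasurable[F (D.t j)] (fun ω => Z j ω * M (D.t j) ω) :=
      (hZs j).mul (hMs _)
    have iZN' : Integrable (fun ω => Z j ω * (M (D.t (j+1)) ω ^ 2 - A (D.t (j+1)) ω)) μ :=
      hmulZInt j _ (hNLp (j+1) hj1)
    have iZN : Integrable (fun ω => Z j ω * (M (D.t j) ω ^ 2 - A (D.t j) ω)) μ :=
      hmulZInt j _ (hNLp j hj.le)
    have iZa : Integrable (fun ω => Z j ω * a j ω) μ := hmulZInt j _ (haLp j hj)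
    have iZMM' : Integrable (fun ω => (Z j ω * M (D.t j) ω) * M (D.t (j+1)) ω) μ := by
      have := hmulZInt j _ (hMMLp (D.t j) (D.t (j+1)))
      have e : (fun ω => Z j ω * (M (D.t j) ω * M (D.t (j+1)) ω))
          = fun ω => (Z j ω * M (D.t j) ω) * M (D.t (j+1)) ω := by
        funext ω; ring
      rwa [e] at this
    have iZMM : Integrable (fun ω => (Z j ω * M (D.t j) ω) * M (D.t j) ω) μ := by
      have := hmulZInt j _ (hMMLp (D.t j) (D.t j))
      have e : (fun ω => Z j ω * (M (D.t j) ω * M (D.t j) ω))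
          = fun ω => (Z j ω * M (D.t j) ω) * M (D.t j) ω := by
        funext ω; ring
      rwa [e] at this
    have iZx2 : Integrable (fun ω => Z j ω * x j ω ^ 2) μ := hmulZInt j _ (hx2Lp j)
    have hmart1 : (∫ ω, Z j ω * (M (D.t (j+1)) ω ^ 2 - A (D.t (j+1)) ω) ∂μ)
        = ∫ ω, Z j ω * (M (D.t j) ω ^ 2 - A (D.t j) ω) ∂μ :=
      s14_mart_test hNmart hst (hZs j) iZN'
    have hmart2 : (∫ ω, (Z j ω * M (D.t j) ω) * M (D.t (j+1)) ω ∂μ)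
        = ∫ ω, (Z j ω * M (D.t j) ω) * M (D.t j) ω ∂μ :=
      s14_mart_test hMart hst hZMs iZMM'
    have e : (fun ω => Z j ω * x j ω ^ 2 - Z j ω * a j ω)
        = fun ω => (Z j ω * (M (D.t (j+1)) ω ^ 2 - A (D.t (j+1)) ω)
            - Z j ω * (M (D.t j) ω ^ 2 - A (D.t j) ω))
          - 2*((Z j ω * M (D.t j) ω) * M (D.t (j+1)) ω
            - (Z j ω * M (D.t j) ω) * M (D.t j) ω) := by
      funext ω
      rw [hxdef, hadef]
      ring
    have i12 : Integrable (fun ω => Z j ω * (M (D.t (j+1)) ω ^ 2 - A (D.t (j+1)) ω)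
        - Z j ω * (M (D.t j) ω ^ 2 - A (D.t j) ω)) μ := iZN'.sub iZN
    have i34 : Integrable (fun ω => 2*((Z j ω * M (D.t j) ω) * M (D.t (j+1)) ω
        - (Z j ω * M (D.t j) ω) * M (D.t j) ω)) μ := (iZMM'.sub iZMM).const_mul 2
    have h0 : (∫ ω, (Z j ω * x j ω ^ 2 - Z j ω * a j ω) ∂μ) = 0 := by
      rw [e, integral_sub i12 i34, integral_sub iZN' iZN, MeasureTheory.integral_const_mul,
        integral_sub iZMM' iZMM, hmart1, hmart2]
      ring
    rw [integral_sub iZx2 iZa] at h0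
    have h2 : (∫ ω, Z j ω * x j ω ^ 2 ∂μ) = ∫ ω, Z j ω * a j ω ∂μ := by linarith
    calc (∫ ω, x j ω ^ 2 * Z j ω ∂μ) = ∫ ω, Z j ω * x j ω ^ 2 ∂μ := by
          congr 1; funext ω; ring
      _ = ∫ ω, Z j ω * a j ω ∂μ := h2
      _ = ∫ ω, a j ω * Z j ω ∂μ := by congr 1; funext ω; ring
  -- ======== integrability of the power functions ========
  have hrpowInt : ∀ (f : Ω → ℝ), MemLp f P μ → (∀ ω, 0 ≤ f ω) →
      Integrable (fun ω => f ω ^ p) μ := by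
    intro f hf hnn
    have h := hf.integrable_norm_rpow hPne0 hPneT
    refine h.congr (Eventually.of_forall fun ω => ?_)
    show ‖f ω‖ ^ P.toReal = f ω ^ p
    rw [hPtoReal, Real.norm_eq_abs, abs_of_nonneg (hnn ω)]
  have hGpInt : Integrable (fun ω => G n ω ^ p) μ := hrpowInt _ (hGLp n) (hGnn n)
  have hADLp : MemLp (fun ω => AT ω + Dst ω) P μ := hATLp.add hDstLp
  have hADpInt : Integrable (fun ω => (AT ω + Dst ω) ^ p) μ :=
    hrpowInt _ hADLp (fun ω => add_nonneg (hATnn ω) (hDstnn ω))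
  have hATpInt : Integrable (fun ω => AT ω ^ p) μ := hrpowInt _ hATLp hATnn
  have hDstpInt : Integrable (fun ω => Dst ω ^ p) μ := hrpowInt _ hDstLp hDstnn
  have hxZInt : ∀ j, Integrable (fun ω => x j ω ^ 2 * Z j ω) μ := fun j =>
    (hmulZInt j _ (hx2Lp j)).congr (Eventually.of_forall fun ω => by ring)
  have haZInt : ∀ j, j < n → Integrable (fun ω => a j ω * Z j ω) μ := fun j hj =>
    (hmulZInt j _ (haLp j hj)).congr (Eventually.of_forall fun ω => by ring)
  have haZnInt : ∀ j, j < n → Integrable (fun ω => a j ω * Z n ω) μ := fun j hj =>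
    (hmulZInt n _ (haLp j hj)).congr (Eventually.of_forall fun ω => by ring)
  have hAZnInt : Integrable (fun ω => AT ω * Z n ω) μ :=
    (hmulZInt n _ hATLp).congr (Eventually.of_forall fun ω => by ring)
  have hDZnInt : Integrable (fun ω => Dst ω * Z n ω) μ :=
    (hmulZInt n _ hDstLp).congr (Eventually.of_forall fun ω => by ring)
  have hADZnInt : Integrable (fun ω => (AT ω + Dst ω) * Z n ω) μ := by
    refine (hAZnInt.add hDZnInt).congr (Eventually.of_forall fun ω => ?_)
    show AT ω * Z n ω + Dst ω * Z n ω = (AT ω + Dst ω) * Z n ω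
    ring
  have iSum : Integrable (fun ω => ∑ j ∈ Finset.range n, x j ω ^ 2 * Z j ω) μ :=
    integrable_finset_sum _ (fun j _ => hxZInt j)
  have hstep : ∀ k ω, G (k+1) ω - G k ω = x k ω ^ 2 := by
    intro k ω; rw [hGdef]; simp [Finset.sum_range_succ]
  -- ======== Garsia chain ========
  have hR2 : (∫ ω, G n ω ^ p ∂μ) ≤ p * ∫ ω, (AT ω + Dst ω) * Z n ω ∂μ := by
    have hpw : ∀ ω, G n ω ^ p
        ≤ p * ((∑ j ∈ Finset.range n, x j ω ^ 2 * Z j ω) + Dst ω * Z n ω) := by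
      intro ω
      have h := s14_pathwise hp1 (fun k => G k ω) (by rw [hGdef]; simp)
        (fun k => hGmono (Nat.le_succ k) ω) (hDstnn ω) n
        (fun k hk => by rw [hstep k ω]; exact hxsqDst k hk ω)
      have e : (∑ k ∈ Finset.range n, (G (k+1) ω - G k ω) * (G k ω) ^ (p-1))
          = ∑ j ∈ Finset.range n, x j ω ^ 2 * Z j ω := by
        refine Finset.sum_congr rfl fun k _ => ?_
        rw [hstep k ω, hZdef]
      rw [e] at h
      have hZnG : Z n ω = G n ω ^ (p-1) := by rw [hZdef]
      rw [hZnG]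
      linarith [h]
    have hRHSInt : Integrable
        (fun ω => p * ((∑ j ∈ Finset.range n, x j ω ^ 2 * Z j ω) + Dst ω * Z n ω)) μ :=
      ((iSum.add hDZnInt).const_mul p : _)
    calc (∫ ω, G n ω ^ p ∂μ)
        ≤ ∫ ω, p * ((∑ j ∈ Finset.range n, x j ω ^ 2 * Z j ω) + Dst ω * Z n ω) ∂μ :=
          integral_mono hGpInt hRHSInt hpw
      _ = p * ((∑ j ∈ Finset.range n, ∫ ω, x j ω ^ 2 * Z j ω ∂μ) + ∫ ω, Dst ω * Z n ω ∂μ) := by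
          rw [MeasureTheory.integral_const_mul, integral_add iSum hDZnInt,
            integral_finset_sum _ (fun j _ => hxZInt j)]
      _ = p * ((∑ j ∈ Finset.range n, ∫ ω, a j ω * Z j ω ∂μ) + ∫ ω, Dst ω * Z n ω ∂μ) := by
          rw [Finset.sum_congr rfl (fun j hj => R1 j (Finset.mem_range.1 hj))]
      _ ≤ p * ((∑ j ∈ Finset.range n, ∫ ω, a j ω * Z n ω ∂μ) + ∫ ω, Dst ω * Z n ω ∂μ) := by
          apply mul_le_mul_of_nonneg_left _ hp0.le
          apply add_le_add_left
          apply Finset.sum_le_sum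
          intro j hj
          apply integral_mono (haZInt j (Finset.mem_range.1 hj))
            (haZnInt j (Finset.mem_range.1 hj))
          intro ω
          apply mul_le_mul_of_nonneg_left _ (hann j (Finset.mem_range.1 hj) ω)
          rw [hZdef]
          exact Real.rpow_le_rpow (hGnn j ω)
            (hGmono (Finset.mem_range.1 hj).le ω) (by linarith)
      _ = p * ∫ ω, (AT ω + Dst ω) * Z n ω ∂μ := by
          rw [← integral_finset_sum _ (fun j hj => haZnInt j (Finset.mem_range.1 hj)),
            ← integral_add (integrable_finset_sum _
              (fun j hj => haZnInt j (Finset.mem_range.1 hj))) hDZnInt]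
          congr 1
          apply integral_congr_ae
          refine Eventually.of_forall fun ω => ?_
          show (∑ j ∈ Finset.range n, a j ω * Z n ω) + Dst ω * Z n ω
            = (AT ω + Dst ω) * Z n ω
          have htel : (∑ j ∈ Finset.range n, a j ω) = AT ω := by
            rw [hadef]
            simp only []
            rw [Finset.sum_range_sub (fun k => A (D.t k) ω) n]
            have e1 : D.t n = T := D.last n le_rfl
            have e2 : D.t 0 = (0:ℝ) := D.first
            rw [e1, e2, hA0 ω, hATdef, sub_zero]
          rw [← Finset.sum_mul, htel]
          ring
  -- ======== absorption ========
  have hG2 : (∫ ω, G n ω ^ p ∂μ)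
      ≤ 2 * (2*p) ^ (p-1) * ∫ ω, (AT ω + Dst ω) ^ p ∂μ := by
    by_cases h1 : p = 1
    · have hZn1 : ∀ ω, Z n ω = 1 := fun ω => by rw [hZdef]; simp [h1]
      have e1 : (∫ ω, (AT ω + Dst ω) * Z n ω ∂μ) = ∫ ω, (AT ω + Dst ω) ^ p ∂μ := by
        apply integral_congr_ae
        refine Eventually.of_forall fun ω => ?_
        show (AT ω + Dst ω) * Z n ω = (AT ω + Dst ω) ^ p
        rw [hZn1 ω, h1, Real.rpow_one]; ring
      have hnn : 0 ≤ ∫ ω, (AT ω + Dst ω) ^ p ∂μ :=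
        integral_nonneg fun ω => Real.rpow_nonneg (add_nonneg (hATnn ω) (hDstnn ω)) p
      calc (∫ ω, G n ω ^ p ∂μ) ≤ p * ∫ ω, (AT ω + Dst ω) * Z n ω ∂μ := hR2
        _ = ∫ ω, (AT ω + Dst ω) ^ p ∂μ := by rw [e1, h1, one_mul]
        _ ≤ 2 * (2*p) ^ (p-1) * ∫ ω, (AT ω + Dst ω) ^ p ∂μ := by
            have h2 : (1:ℝ) ≤ 2 * (2*p)^(p-1) := by
              rw [h1]; norm_num
            nlinarith [hnn, h2]
    · have hplt : 1 < p := lt_of_le_of_ne hp1 (Ne.symm h1)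
      have hpm : (0:ℝ) < p - 1 := by linarith
      set p' : ℝ := p / (p-1) with hp'def
      have hp'1 : 1 < p' := by rw [hp'def, lt_div_iff₀ hpm]; linarith
      have hconj : Real.HolderConjugate p p' := (Real.holderConjugate_iff_eq_conjExponent hplt).2 hp'def
      set lam : ℝ := (2*p) ^ ((p-1)/p) with hlamdef
      have hlam0 : 0 < lam := Real.rpow_pos_of_pos (by linarith) _
      have hyoung : ∀ ω, p * ((AT ω + Dst ω) * Z n ω)
          ≤ (2*p)^(p-1) * (AT ω + Dst ω)^p + (1/2) * G n ω ^ p := by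
        intro ω
        have hunn : 0 ≤ AT ω + Dst ω := add_nonneg (hATnn ω) (hDstnn ω)
        have hv : Z n ω = G n ω ^ (p-1) := by rw [hZdef]
        have hZnn : 0 ≤ Z n ω := by rw [hv]; exact Real.rpow_nonneg (hGnn n ω) _
        have hy := Real.young_inequality_of_nonneg
          (mul_nonneg hlam0.le hunn) (div_nonneg hZnn hlam0.le) hconj
        have e0 : (lam*(AT ω + Dst ω))*(Z n ω / lam) = (AT ω + Dst ω) * Z n ω := by
          field_simp
        have e1 : (lam*(AT ω + Dst ω))^p = (2*p)^(p-1) * (AT ω + Dst ω)^p := by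
          rw [Real.mul_rpow hlam0.le hunn, hlamdef,
            ← Real.rpow_mul (by linarith : (0:ℝ) ≤ 2*p)]
          have c1 : (p-1)/p * p = p - 1 := by field_simp
          rw [c1]
        have e2 : (Z n ω / lam)^p' = G n ω ^ p / (2*p) := by
          rw [Real.div_rpow hZnn hlam0.le, hv, ← Real.rpow_mul (hGnn n ω), hlamdef,
            ← Real.rpow_mul (by linarith : (0:ℝ) ≤ 2*p)]
          have c1 : (p-1) * p' = p := by rw [hp'def]; field_simp
          have c2 : (p-1)/p * p' = 1 := by rw [hp'def]; field_simp
          rw [c1, c2, Real.rpow_one]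
        rw [e0, e1, e2] at hy
        have hGp0 : 0 ≤ G n ω ^ p := Real.rpow_nonneg (hGnn n ω) _
        have hp'pos : (0:ℝ) < p' := by linarith
        have h5 : p * ((AT ω + Dst ω) * Z n ω)
            ≤ p * ((2*p)^(p-1) * (AT ω + Dst ω)^p / p + G n ω^p/(2*p)/p') :=
          mul_le_mul_of_nonneg_left hy hp0.le
        have h6 : p * ((2*p)^(p-1) * (AT ω + Dst ω)^p / p + G n ω^p/(2*p)/p')
            = (2*p)^(p-1) * (AT ω + Dst ω)^p + G n ω^p * (1/(2*p')) := by
          field_simp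
        have h7 : 1/(2*p') ≤ 1/2 :=
          one_div_le_one_div_of_le (by norm_num) (by linarith)
        have h8 : G n ω^p * (1/(2*p')) ≤ G n ω^p * (1/2) :=
          mul_le_mul_of_nonneg_left h7 hGp0
        rw [h6] at h5
        linarith [h5, h8]
      have hLHSInt : Integrable (fun ω => p * ((AT ω + Dst ω) * Z n ω)) μ :=
        (hADZnInt.const_mul p : _)
      have hRHSInt2 : Integrable
          (fun ω => (2*p)^(p-1) * (AT ω + Dst ω)^p + (1/2) * G n ω ^ p) μ :=
        ((hADpInt.const_mul _).add (hGpInt.const_mul _) : _)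
      have h4 : p * (∫ ω, (AT ω + Dst ω) * Z n ω ∂μ)
          ≤ (2*p)^(p-1) * (∫ ω, (AT ω + Dst ω)^p ∂μ) + (1/2) * ∫ ω, G n ω ^ p ∂μ := by
        calc p * (∫ ω, (AT ω + Dst ω) * Z n ω ∂μ)
            = ∫ ω, p * ((AT ω + Dst ω) * Z n ω) ∂μ :=
              (MeasureTheory.integral_const_mul p _).symm
          _ ≤ ∫ ω, ((2*p)^(p-1) * (AT ω + Dst ω)^p + (1/2) * G n ω ^ p) ∂μ :=
              integral_mono hLHSInt hRHSInt2 hyoung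
          _ = (2*p)^(p-1) * (∫ ω, (AT ω + Dst ω)^p ∂μ) + (1/2) * ∫ ω, G n ω ^ p ∂μ := by
              rw [integral_add (hADpInt.const_mul _) (hGpInt.const_mul _),
                MeasureTheory.integral_const_mul, MeasureTheory.integral_const_mul]
      linarith [hR2, h4]
  -- ======== final real-number chain ========
  have hSmem : MemLp (fun ω => G n ω - AT ω) P μ := (hGLp n).sub hATLp
  have hSpInt : Integrable (fun ω => |G n ω - AT ω| ^ p) μ := by
    have h := hSmem.integrable_norm_rpow hPne0 hPneT
    refine h.congr (Eventually.of_forall fun ω => ?_)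
    show ‖G n ω - AT ω‖ ^ P.toReal = |G n ω - AT ω| ^ p
    rw [hPtoReal, Real.norm_eq_abs]
  have hpw1 : ∀ ω, |G n ω - AT ω| ^ p ≤ 2^p * (G n ω ^ p + AT ω ^ p) := by
    intro ω
    have h1 : |G n ω - AT ω| ≤ G n ω + AT ω := by
      rw [abs_sub_le_iff]
      constructor
      · linarith [hATnn ω]
      · linarith [hGnn n ω]
    calc |G n ω - AT ω| ^ p ≤ (G n ω + AT ω)^p :=
          Real.rpow_le_rpow (abs_nonneg _) h1 hp0.le
      _ ≤ 2^p * (G n ω ^ p + AT ω ^ p) := s14_add_rpow_le hp0.le (hGnn n ω) (hATnn ω)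
  have hpw2 : ∀ ω, (AT ω + Dst ω)^p ≤ 2^p * (AT ω ^ p + Dst ω ^ p) := fun ω =>
    s14_add_rpow_le hp0.le (hATnn ω) (hDstnn ω)
  have hEA : (0:ℝ) ≤ ∫ ω, AT ω ^ p ∂μ :=
    integral_nonneg fun ω => Real.rpow_nonneg (hATnn ω) _
  have hED : (0:ℝ) ≤ ∫ ω, Dst ω ^ p ∂μ :=
    integral_nonneg fun ω => Real.rpow_nonneg (hDstnn ω) _
  have hstep1 : (∫ ω, |G n ω - AT ω| ^ p ∂μ)
      ≤ 2^p * ((∫ ω, G n ω ^ p ∂μ) + ∫ ω, AT ω ^ p ∂μ) := by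
    calc (∫ ω, |G n ω - AT ω| ^ p ∂μ)
        ≤ ∫ ω, 2^p * (G n ω ^ p + AT ω ^ p) ∂μ :=
          integral_mono hSpInt ((hGpInt.add hATpInt).const_mul _ : _) hpw1
      _ = 2^p * ((∫ ω, G n ω ^ p ∂μ) + ∫ ω, AT ω ^ p ∂μ) := by
          rw [MeasureTheory.integral_const_mul, integral_add hGpInt hATpInt]
  have hstep2 : (∫ ω, (AT ω + Dst ω) ^ p ∂μ)
      ≤ 2^p * ((∫ ω, AT ω ^ p ∂μ) + ∫ ω, Dst ω ^ p ∂μ) := by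
    calc (∫ ω, (AT ω + Dst ω) ^ p ∂μ)
        ≤ ∫ ω, 2^p * (AT ω ^ p + Dst ω ^ p) ∂μ :=
          integral_mono hADpInt ((hATpInt.add hDstpInt).const_mul _ : _) hpw2
      _ = 2^p * ((∫ ω, AT ω ^ p ∂μ) + ∫ ω, Dst ω ^ p ∂μ) := by
          rw [MeasureTheory.integral_const_mul, integral_add hATpInt hDstpInt]
  have hmain : (∫ ω, |G n ω - AT ω| ^ p ∂μ)
      ≤ Kq * ((∫ ω, AT ω ^ p ∂μ) + ∫ ω, Dst ω ^ p ∂μ) := by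
    have h2p0 : (0:ℝ) < 2^p := Real.rpow_pos_of_pos two_pos p
    have hc0 : (0:ℝ) < (2*p)^(p-1) := Real.rpow_pos_of_pos (by linarith) _
    have m1 : 2^p * (∫ ω, G n ω ^ p ∂μ)
        ≤ 2^p * (2 * (2*p)^(p-1) * ∫ ω, (AT ω + Dst ω) ^ p ∂μ) :=
      mul_le_mul_of_nonneg_left hG2 h2p0.le
    have m2 : (2^p * (2 * (2*p)^(p-1))) * (∫ ω, (AT ω + Dst ω) ^ p ∂μ)
        ≤ (2^p * (2 * (2*p)^(p-1))) * (2^p * ((∫ ω, AT ω ^ p ∂μ) + ∫ ω, Dst ω ^ p ∂μ)) :=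
      mul_le_mul_of_nonneg_left hstep2 (by positivity)
    have m3 : (0:ℝ) ≤ 2^p * (∫ ω, Dst ω ^ p ∂μ) := by positivity
    rw [hKqdef]
    nlinarith [hstep1, m1, m2, m3]
  -- ======== ENNReal conversions ========
  have hATp_lint : ENNReal.ofReal (∫ ω, AT ω ^ p ∂μ)
      ≤ ∫⁻ ω, pVar 1 (fun t => A t ω) 0 T ^ p ∂μ := by
    rw [ofReal_integral_eq_lintegral_ofReal hATpInt
      (Eventually.of_forall fun ω => Real.rpow_nonneg (hATnn ω) _)]
    refine lintegral_mono fun ω => ?_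
    rw [← ENNReal.ofReal_rpow_of_nonneg (hATnn ω) hp0.le]
    exact ENNReal.rpow_le_rpow (hATbound ω) hp0.le
  have hDst_lint : ENNReal.ofReal (∫ ω, Dst ω ^ p ∂μ)
      ≤ ∫⁻ ω, pVar 4 (fun t => M t ω) 0 T ^ (q/4) ∂μ := by
    rw [ofReal_integral_eq_lintegral_ofReal hDstpInt
      (Eventually.of_forall fun ω => Real.rpow_nonneg (hDstnn ω) _)]
    refine lintegral_mono fun ω => ?_
    have hy : (0:ℝ) ≤ ∑ j ∈ Finset.range n, ((x j ω)^2)^2 :=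
      Finset.sum_nonneg fun j _ => sq_nonneg _
    have e1 : Dst ω ^ p = (∑ j ∈ Finset.range n, ((x j ω)^2)^2) ^ (p/2) := by
      rw [hDstdef]
      show Real.sqrt (∑ j ∈ Finset.range n, ((x j ω)^2)^2) ^ p = _
      rw [Real.sqrt_eq_rpow, ← Real.rpow_mul hy]
      congr 1
      ring
    have hle : ENNReal.ofReal (∑ j ∈ Finset.range n, ((x j ω)^2)^2)
        ≤ pVar 4 (fun t => M t ω) 0 T := by
      have h2 := le_iSup (fun D' : RPPartition 0 T =>
        ENNReal.ofReal (∑ k ∈ Finset.range D'.n,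
          ‖(fun t => M t ω) (D'.t (k+1)) - (fun t => M t ω) (D'.t k)‖ ^ (4:ℝ))) D
      refine le_trans (le_of_eq ?_) h2
      congr 1
      refine Finset.sum_congr rfl fun k _ => ?_
      show ((x k ω)^2)^2 = ‖M (D.t (k+1)) ω - M (D.t k) ω‖ ^ (4:ℝ)
      rw [hxdef]
      show ((M (D.t (k+1)) ω - M (D.t k) ω)^2)^2 = _
      rw [Real.norm_eq_abs, show ((4:ℝ)) = ((4:ℕ):ℝ) by norm_num, Real.rpow_natCast,
        pow_abs, abs_of_nonneg (by positivity : (0:ℝ) ≤ (M (D.t (k+1)) ω - M (D.t k) ω)^4)]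
      ring
    rw [e1, ← ENNReal.ofReal_rpow_of_nonneg hy (by positivity)]
    calc ENNReal.ofReal (∑ j ∈ Finset.range n, ((x j ω)^2)^2) ^ (p/2)
        ≤ pVar 4 (fun t => M t ω) 0 T ^ (p/2) := ENNReal.rpow_le_rpow hle (by positivity)
      _ = pVar 4 (fun t => M t ω) 0 T ^ (q/4) := by
          congr 1
          rw [hpdef]; ring
  -- ======== conclusion ========
  calc (∫⁻ ω, ENNReal.ofReal
        (|(∑ k ∈ Finset.range n, (M (D.t (k+1)) ω - M (D.t k) ω) ^ 2) - AT ω| ^ p) ∂μ)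
      = ENNReal.ofReal (∫ ω, |G n ω - AT ω| ^ p ∂μ) := by
        rw [ofReal_integral_eq_lintegral_ofReal hSpInt
          (Eventually.of_forall fun ω => Real.rpow_nonneg (abs_nonneg _) _)]
    _ ≤ ENNReal.ofReal (Kq * ((∫ ω, AT ω ^ p ∂μ) + ∫ ω, Dst ω ^ p ∂μ)) :=
        ENNReal.ofReal_le_ofReal hmain
    _ = ENNReal.ofReal Kq * (ENNReal.ofReal (∫ ω, AT ω ^ p ∂μ)
        + ENNReal.ofReal (∫ ω, Dst ω ^ p ∂μ)) := by
        rw [ENNReal.ofReal_mul hKq0.le, ENNReal.ofReal_add hEA hED]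
    _ ≤ ENNReal.ofReal Kq * ((∫⁻ ω, pVar 1 (fun t => A t ω) 0 T ^ p ∂μ)
        + ∫⁻ ω, pVar 4 (fun t => M t ω) 0 T ^ (q/4) ∂μ) :=
        mul_le_mul_right (add_le_add hATp_lint hDst_lint) _
    _ = ENNReal.ofReal Kq * ((∫⁻ ω, pVar 4 (fun t => M t ω) 0 T ^ (q/4) ∂μ)
        + ∫⁻ ω, pVar 1 (fun t => A t ω) 0 T ^ p ∂μ) := by
        rw [add_comm]
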